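/- Let A be a 4-by-4 reciprocal matrix. There exist real numbers X₁, X₂, c₁, c₂ such that det(Re(e^{iθ}A) − λI₄) = (λ² − (X₁²cos²θ + c₁²))·(λ² − (X₂²cos²θ + c₂²)) for all θ, λ ∈ ℝ if and only if ξ₂ = φξ₁ − φ⁻¹ξ₃ or ξ₂ = φξ₃ − φ⁻¹ξ₁. (This is the criterion for the Kippenhahn curve of A to consist of two ellipses centered at the origin.) -/

import Mathlib

open Matrix Polynomial

/-- A tridiagonal complex matrix with zero main diagonal whose symmetric
off-diagonal entries have pairwise products equal to one. -/
def IsReciprocal {n : ℕ} (A : Matrix (Fin n) (Fin n) ℂ) : Prop :=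
  (∀ i j : Fin n, ((i : ℤ) - (j : ℤ)) ^ 2 ≠ 1 → A i j = 0) ∧
  ∀ i j : Fin n, (j : ℕ) = (i : ℕ) + 1 → A i j * A j i = 1

/-- The Hermitian matrix `Re (e^{iθ} A) = (e^{iθ}A + (e^{iθ}A)*)/2`. -/
noncomputable def RePart {n : ℕ} (θ : ℝ) (A : Matrix (Fin n) (Fin n) ℂ) :
    Matrix (Fin n) (Fin n) ℂ :=
  (2 : ℂ)⁻¹ • (Complex.exp (θ * Complex.I) • A + (Complex.exp (θ * Complex.I) • A)ᴴ)

private lemma entry_prod (θ : ℝ) (a b : ℂ) (h : a * b = 1) :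
    (2⁻¹ * (Complex.exp (θ * Complex.I) * a + (starRingEnd ℂ) (Complex.exp (θ * Complex.I) * b))) *
      (2⁻¹ * (Complex.exp (θ * Complex.I) * b + (starRingEnd ℂ) (Complex.exp (θ * Complex.I) * a))) =
      (((‖a‖ - ‖b‖) ^ 2 / 4 + Real.cos θ ^ 2 : ℝ) : ℂ) := by
  have hEE : Complex.exp (θ * Complex.I) * (starRingEnd ℂ) (Complex.exp (θ * Complex.I)) = 1 := by
    rw [Complex.mul_conj, Complex.normSq_eq_norm_sq, Complex.norm_exp_ofReal_mul_I]
    norm_num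
  have hEsum : Complex.exp (θ * Complex.I) + (starRingEnd ℂ) (Complex.exp (θ * Complex.I))
      = 2 * (Real.cos θ : ℂ) := by
    rw [Complex.add_conj, Complex.exp_ofReal_mul_I_re]
    norm_num
  have ha : a * (starRingEnd ℂ) a = ((‖a‖ ^ 2 : ℝ) : ℂ) := by
    rw [Complex.mul_conj, Complex.normSq_eq_norm_sq]
  have hb : b * (starRingEnd ℂ) b = ((‖b‖ ^ 2 : ℝ) : ℂ) := by
    rw [Complex.mul_conj, Complex.normSq_eq_norm_sq]
  have hcc : (starRingEnd ℂ) a * (starRingEnd ℂ) b = 1 := by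
    rw [← _root_.map_mul, h, _root_.map_one]
  have hab2 : ((‖a‖ : ℝ) : ℂ) * ((‖b‖ : ℝ) : ℂ) = 1 := by
    norm_cast
    rw [← norm_mul, h, norm_one]
  linear_combination (norm := (simp only [_root_.map_mul]; push_cast; ring1))
    (4⁻¹ * (Complex.exp (θ * Complex.I))^2) * h
    + (4⁻¹ * ((starRingEnd ℂ) (Complex.exp (θ * Complex.I)))^2) * hcc
    + (4⁻¹ * (Complex.exp (θ * Complex.I) * (starRingEnd ℂ) (Complex.exp (θ * Complex.I)))) * ha
    + (4⁻¹ * (Complex.exp (θ * Complex.I) * (starRingEnd ℂ) (Complex.exp (θ * Complex.I)))) * hb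
    + (4⁻¹ * (((‖a‖ : ℝ):ℂ)^2 + ((‖b‖ : ℝ):ℂ)^2) - 2⁻¹) * hEE
    + 2⁻¹ * hab2
    + 4⁻¹ * (Complex.exp (θ * Complex.I) + (starRingEnd ℂ) (Complex.exp (θ * Complex.I)) + 2*((Real.cos θ : ℝ):ℂ)) * hEsum

private lemma det_tri (d m1 m2 m3 n1 n2 n3 : ℂ) :
    (!![-d, m1, 0, 0; n1, -d, m2, 0; 0, n2, -d, m3; 0, 0, n3, -d]).det
      = d^2*d^2 - (m1*n1 + m2*n2 + m3*n3)*d^2 + (m1*n1)*(m3*n3) := by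
  simp [Matrix.det_succ_row_zero, Fin.sum_univ_succ, Fin.succAbove]
  ring

private lemma key_det (A : Matrix (Fin 4) (Fin 4) ℂ) (hA : IsReciprocal A) (θ lam : ℝ) :
    (RePart θ A - (lam : ℂ) • 1).det =
      ((lam ^ 2 * lam ^ 2
          - (3 * Real.cos θ ^ 2 + ((‖A 0 1‖ - ‖A 1 0‖) ^ 2 / 4
              + (‖A 1 2‖ - ‖A 2 1‖) ^ 2 / 4
              + (‖A 2 3‖ - ‖A 3 2‖) ^ 2 / 4)) * lam ^ 2
          + (Real.cos θ ^ 2 + (‖A 0 1‖ - ‖A 1 0‖) ^ 2 / 4)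
            * (Real.cos θ ^ 2 + (‖A 2 3‖ - ‖A 3 2‖) ^ 2 / 4) : ℝ) : ℂ) := by
  obtain ⟨hz, hp⟩ := hA
  have z00 : A 0 0 = 0 := hz 0 0 (by decide)
  have z11 : A 1 1 = 0 := hz 1 1 (by decide)
  have z22 : A 2 2 = 0 := hz 2 2 (by decide)
  have z33 : A 3 3 = 0 := hz 3 3 (by decide)
  have z02 : A 0 2 = 0 := hz 0 2 (by decide)
  have z20 : A 2 0 = 0 := hz 2 0 (by decide)
  have z03 : A 0 3 = 0 := hz 0 3 (by decide)
  have z30 : A 3 0 = 0 := hz 3 0 (by decide)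
  have z13 : A 1 3 = 0 := hz 1 3 (by decide)
  have z31 : A 3 1 = 0 := hz 3 1 (by decide)
  have p1 : A 0 1 * A 1 0 = 1 := hp 0 1 rfl
  have p2 : A 1 2 * A 2 1 = 1 := hp 1 2 rfl
  have p3 : A 2 3 * A 3 2 = 1 := hp 2 3 rfl
  have e1 := entry_prod θ (A 0 1) (A 1 0) p1
  have e2 := entry_prod θ (A 1 2) (A 2 1) p2
  have e3 := entry_prod θ (A 2 3) (A 3 2) p3
  set E := Complex.exp (θ * Complex.I) with hE
  have hM : RePart θ A - (lam : ℂ) • 1 =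
      !![-(lam:ℂ), 2⁻¹ * (E * A 0 1 + (starRingEnd ℂ) (E * A 1 0)), 0, 0;
         2⁻¹ * (E * A 1 0 + (starRingEnd ℂ) (E * A 0 1)), -(lam:ℂ), 2⁻¹ * (E * A 1 2 + (starRingEnd ℂ) (E * A 2 1)), 0;
         0, 2⁻¹ * (E * A 2 1 + (starRingEnd ℂ) (E * A 1 2)), -(lam:ℂ), 2⁻¹ * (E * A 2 3 + (starRingEnd ℂ) (E * A 3 2));
         0, 0, 2⁻¹ * (E * A 3 2 + (starRingEnd ℂ) (E * A 2 3)), -(lam:ℂ)] := by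
    ext i j
    fin_cases i <;> fin_cases j <;>
      simp [RePart, Matrix.one_apply, z00, z11, z22, z33, z02, z20, z03, z30, z13, z31,
        Matrix.conjTranspose_apply, Matrix.vecHead, Matrix.vecTail, _root_.map_mul, mul_add, ← hE]
  rw [hM, det_tri]
  linear_combination (norm := (push_cast; ring1))
    ((2⁻¹ * (E * A 2 3 + (starRingEnd ℂ) (E * A 3 2))) * (2⁻¹ * (E * A 3 2 + (starRingEnd ℂ) (E * A 2 3)))
        - (lam:ℂ)^2) * e1
    - (lam:ℂ)^2 * e2
    + (((Real.cos θ ^ 2 + (‖A 0 1‖ - ‖A 1 0‖) ^ 2 / 4 : ℝ) : ℂ) - (lam:ℂ)^2) * e3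

/-- Criterion for the Kippenhahn curve of a 4-by-4 reciprocal matrix to consist of
two ellipses centered at the origin. -/
theorem two_concentric_ellipses_four (A : Matrix (Fin 4) (Fin 4) ℂ) (hA : IsReciprocal A)
    (ξ₁ ξ₂ ξ₃ : ℝ)
    (h1 : ξ₁ = (‖A 0 1‖ - ‖A 1 0‖) ^ 2 / 4)
    (h2 : ξ₂ = (‖A 1 2‖ - ‖A 2 1‖) ^ 2 / 4)
    (h3 : ξ₃ = (‖A 2 3‖ - ‖A 3 2‖) ^ 2 / 4)
    (φ : ℝ) (hφ : φ = (1 + Real.sqrt 5) / 2) :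
    (∃ X₁ X₂ c₁ c₂ : ℝ, ∀ θ lam : ℝ,
      (RePart θ A - (lam : ℂ) • 1).det =
        (((lam ^ 2 - (X₁ ^ 2 * Real.cos θ ^ 2 + c₁ ^ 2)) *
          (lam ^ 2 - (X₂ ^ 2 * Real.cos θ ^ 2 + c₂ ^ 2)) : ℝ) : ℂ)) ↔
      (ξ₂ = φ * ξ₁ - φ⁻¹ * ξ₃ ∨ ξ₂ = φ * ξ₃ - φ⁻¹ * ξ₁) := by
  have hξ1 : 0 ≤ ξ₁ := by rw [h1]; positivity
  have hξ3 : 0 ≤ ξ₃ := by rw [h3]; positivity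
  have h5 : Real.sqrt 5 ^ 2 = 5 := Real.sq_sqrt (by norm_num)
  have hφ2 : φ ^ 2 = φ + 1 := by rw [hφ]; linear_combination h5 / 4
  have hφpos : 0 < φ := by rw [hφ]; positivity
  have hφinv : φ⁻¹ = φ - 1 := by
    have hmul : φ * (φ - 1) = 1 := by linear_combination hφ2
    exact inv_eq_of_mul_eq_one_right hmul
  have key : ∀ θ lam : ℝ, (RePart θ A - (lam : ℂ) • 1).det =
      ((lam ^ 2 * lam ^ 2 - (3 * Real.cos θ ^ 2 + (ξ₁ + ξ₂ + ξ₃)) * lam ^ 2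
        + (Real.cos θ ^ 2 + ξ₁) * (Real.cos θ ^ 2 + ξ₃) : ℝ) : ℂ) := by
    intro θ lam
    rw [h1, h2, h3]
    have := key_det A hA θ lam
    exact this
  constructor
  · rintro ⟨X₁, X₂, c₁, c₂, hX⟩
    have hreal : ∀ θ lam : ℝ,
        lam ^ 2 * lam ^ 2 - (3 * Real.cos θ ^ 2 + (ξ₁ + ξ₂ + ξ₃)) * lam ^ 2
            + (Real.cos θ ^ 2 + ξ₁) * (Real.cos θ ^ 2 + ξ₃) =
          (lam ^ 2 - (X₁ ^ 2 * Real.cos θ ^ 2 + c₁ ^ 2)) *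
            (lam ^ 2 - (X₂ ^ 2 * Real.cos θ ^ 2 + c₂ ^ 2)) := by
      intro θ lam
      have h := (key θ lam).symm.trans (hX θ lam)
      exact_mod_cast h
    have B1 := hreal (Real.pi / 2) 0
    have B2 := hreal (Real.pi / 2) 1
    have B3 := hreal 0 0
    have B4 := hreal 0 1
    have B5 := hreal (Real.pi / 3) 0
    rw [Real.cos_pi_div_two] at B1 B2
    rw [Real.cos_zero] at B3 B4
    rw [Real.cos_pi_div_three] at B5
    have e_S : c₁ ^ 2 + c₂ ^ 2 = ξ₁ + ξ₂ + ξ₃ := by linear_combination B2 - B1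
    have e_xy3 : X₁ ^ 2 + X₂ ^ 2 = 3 := by linear_combination B4 - B3 - e_S
    have eI : X₁ ^ 2 * X₂ ^ 2 + (X₁ ^ 2 * c₂ ^ 2 + X₂ ^ 2 * c₁ ^ 2) = 1 + (ξ₁ + ξ₃) := by
      linear_combination B1 - B3
    have eII : X₁ ^ 2 * X₂ ^ 2 + 4 * (X₁ ^ 2 * c₂ ^ 2 + X₂ ^ 2 * c₁ ^ 2) = 1 + 4 * (ξ₁ + ξ₃) := by
      linear_combination 16 * B1 - 16 * B5
    have e_u : X₁ ^ 2 * X₂ ^ 2 = 1 := by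
      linear_combination (4 / 3 : ℝ) * eI - (1 / 3 : ℝ) * eII
    have e_w : X₁ ^ 2 * c₂ ^ 2 + X₂ ^ 2 * c₁ ^ 2 = ξ₁ + ξ₃ := by
      linear_combination (1 / 3 : ℝ) * eII - (1 / 3 : ℝ) * eI
    have hV : X₁ ^ 2 * c₁ ^ 2 + X₂ ^ 2 * c₂ ^ 2 = 2 * (ξ₁ + ξ₃) + 3 * ξ₂ := by
      linear_combination (c₁ ^ 2 + c₂ ^ 2) * e_xy3 + 3 * e_S - e_w
    have hPQ : (c₁ ^ 2) ^ 2 + (c₂ ^ 2) ^ 2 = (ξ₁ + ξ₂ + ξ₃) ^ 2 - 2 * (ξ₁ * ξ₃) := by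
      linear_combination (c₁ ^ 2 + c₂ ^ 2 + ξ₁ + ξ₂ + ξ₃) * e_S + 2 * B1
    have hx2y2 : (X₁ ^ 2) ^ 2 + (X₂ ^ 2) ^ 2 = 7 := by
      linear_combination (X₁ ^ 2 + X₂ ^ 2 + 3) * e_xy3 - 2 * e_u
    have hkey2 : (ξ₁ + ξ₃) * (2 * (ξ₁ + ξ₃) + 3 * ξ₂)
        = ((ξ₁ + ξ₂ + ξ₃) ^ 2 - 2 * (ξ₁ * ξ₃)) + 7 * (ξ₁ * ξ₃) := by
      linear_combination -((X₁ ^ 2 * c₁ ^ 2 + X₂ ^ 2 * c₂ ^ 2)) * e_w - (ξ₁ + ξ₃) * hV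
        + ((c₁ ^ 2) ^ 2 + (c₂ ^ 2) ^ 2) * e_u + (c₁ ^ 2 * c₂ ^ 2) * hx2y2 + hPQ - 7 * B1
    have hquad : ξ₂ ^ 2 - (ξ₁ + ξ₃) * ξ₂ - (ξ₁ + ξ₃) ^ 2 + 5 * (ξ₁ * ξ₃) = 0 := by
      linear_combination -hkey2
    have hfact : (ξ₂ - (φ * ξ₁ - (φ - 1) * ξ₃)) * (ξ₂ - (φ * ξ₃ - (φ - 1) * ξ₁)) = 0 := by
      linear_combination hquad + (2 * ξ₁ * ξ₃ - ξ₁ ^ 2 - ξ₃ ^ 2) * hφ2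
    rcases mul_eq_zero.1 hfact with h | h
    · left; rw [hφinv]; linarith [sub_eq_zero.1 h]
    · right; rw [hφinv]; linarith [sub_eq_zero.1 h]
  · have hs1 : Real.sqrt ξ₁ ^ 2 = ξ₁ := Real.sq_sqrt hξ1
    have hs3 : Real.sqrt ξ₃ ^ 2 = ξ₃ := Real.sq_sqrt hξ3
    rintro (hc | hc)
    · refine ⟨φ, φ⁻¹, φ * Real.sqrt ξ₁, φ⁻¹ * Real.sqrt ξ₃, fun θ lam => ?_⟩
      rw [key θ lam]
      refine congrArg Complex.ofReal ?_
      rw [hφinv] at hc ⊢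
      linear_combination (lam ^ 2 * (2 * Real.cos θ ^ 2 + ξ₁ + ξ₃)
          - (φ ^ 2 - φ + 1) * (Real.cos θ ^ 2 + ξ₁) * (Real.cos θ ^ 2 + ξ₃)) * hφ2
        - lam ^ 2 * hc
        + (φ ^ 2 * (lam ^ 2 - ((φ - 1) ^ 2 * Real.cos θ ^ 2 + ((φ - 1) * Real.sqrt ξ₃) ^ 2))) * hs1
        + ((φ - 1) ^ 2 * (lam ^ 2 - (φ ^ 2 * Real.cos θ ^ 2 + φ ^ 2 * ξ₁))) * hs3
    · refine ⟨φ, φ⁻¹, φ * Real.sqrt ξ₃, φ⁻¹ * Real.sqrt ξ₁, fun θ lam => ?_⟩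
      rw [key θ lam]
      refine congrArg Complex.ofReal ?_
      rw [hφinv] at hc ⊢
      linear_combination (lam ^ 2 * (2 * Real.cos θ ^ 2 + ξ₁ + ξ₃)
          - (φ ^ 2 - φ + 1) * (Real.cos θ ^ 2 + ξ₃) * (Real.cos θ ^ 2 + ξ₁)) * hφ2
        - lam ^ 2 * hc
        + (φ ^ 2 * (lam ^ 2 - ((φ - 1) ^ 2 * Real.cos θ ^ 2 + ((φ - 1) * Real.sqrt ξ₁) ^ 2))) * hs3
        + ((φ - 1) ^ 2 * (lam ^ 2 - (φ ^ 2 * Real.cos θ ^ 2 + φ ^ 2 * ξ₃))) * hs1
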